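/- Let u, k, ω, σ, λ > 0 and define, for β > 0, M(β) := ½u²k [ sin(ωβ) exp(−½k²σ²(β + λ^{−1}(1 − e^{−λβ}))) − λ ∫₀^∞ exp(−λα − ½k²σ²(α + β + λ^{−1})) sin(ω(α+β)) sinh((k²σ²/(2λ)) e^{−λ(α+β)}) dα ]. Then for every β > 0, |M(β)| ≤ u²k · exp(−½k²σ²β); in particular, M is Lebesgue integrable on (0, ∞). -/

import Mathlib

set_option maxHeartbeats 1000000

open MeasureTheory Real Set

/-- The paper's leading-order Stokes'-drift kernel `M(β)` for the elastic dumbbell,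
with wave amplitude `u`, wavenumber `k`, frequency `ω`, noise strength `σ`,
and spring constant `l` (the paper's `λ`). -/
noncomputable def stokesKernel (u k ω σ l β : ℝ) : ℝ :=
  (1 / 2) * u ^ 2 * k *
    (Real.sin (ω * β) *
        Real.exp (-(k ^ 2 * σ ^ 2 / 2) * (β + l⁻¹ * (1 - Real.exp (-(l * β))))) -
      l * ∫ α in Ioi (0 : ℝ),
        Real.exp (-(l * α) - k ^ 2 * σ ^ 2 / 2 * (α + β + l⁻¹)) * Real.sin (ω * (α + β)) *
          Real.sinh (k ^ 2 * σ ^ 2 / (2 * l) * Real.exp (-(l * (α + β)))))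

section aux

variable {u k ω σ l : ℝ}

/-- Pointwise bound on the inner integrand. -/
lemma stokes_inner_bound (hk : 0 < k) (hσ : 0 < σ) (hl : 0 < l) {β : ℝ} (hβ : 0 ≤ β)
    {α : ℝ} (hα : 0 ≤ α) :
    |Real.exp (-(l * α) - k ^ 2 * σ ^ 2 / 2 * (α + β + l⁻¹)) * Real.sin (ω * (α + β)) *
        Real.sinh (k ^ 2 * σ ^ 2 / (2 * l) * Real.exp (-(l * (α + β))))| ≤
      (1 / 2) * Real.exp (-(k ^ 2 * σ ^ 2 / 2) * β) * Real.exp (-(l * α)) := by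
  rw [show k ^ 2 * σ ^ 2 / (2 * l) = (k ^ 2 * σ ^ 2 / 2) / l by ring]
  set c : ℝ := k ^ 2 * σ ^ 2 / 2 with hc
  have hc0 : 0 < c := by positivity
  have hx0 : 0 ≤ c / l * Real.exp (-(l * (α + β))) := by positivity
  have hsinh : |Real.sinh (c / l * Real.exp (-(l * (α + β))))| ≤
      (1 / 2) * Real.exp (c / l) := by
    rw [abs_of_nonneg (Real.sinh_nonneg_iff.mpr hx0)]
    have h1 : Real.sinh (c / l * Real.exp (-(l * (α + β)))) ≤
        (Real.exp (c / l * Real.exp (-(l * (α + β))))) / 2 := by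
      rw [Real.sinh_eq]
      have : 0 < Real.exp (-(c / l * Real.exp (-(l * (α + β))))) := Real.exp_pos _
      linarith
    have h2 : c / l * Real.exp (-(l * (α + β))) ≤ c / l := by
      have he : Real.exp (-(l * (α + β))) ≤ 1 := by
        rw [Real.exp_le_one_iff]; nlinarith
      nlinarith [div_pos hc0 hl]
    calc Real.sinh (c / l * Real.exp (-(l * (α + β))))
        ≤ Real.exp (c / l * Real.exp (-(l * (α + β)))) / 2 := h1
      _ ≤ Real.exp (c / l) / 2 := by
          have := Real.exp_le_exp.mpr h2; linarith
      _ = (1 / 2) * Real.exp (c / l) := by ring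
  have hexp : Real.exp (-(l * α) - c * (α + β + l⁻¹)) ≤
      Real.exp (-(l * α)) * Real.exp (-c * β) * Real.exp (-(c / l)) := by
    rw [← Real.exp_add, ← Real.exp_add]
    apply Real.exp_le_exp.mpr
    have hcli : c * l⁻¹ = c / l := by rw [div_eq_mul_inv]
    nlinarith [mul_nonneg hc0.le hα]
  have hsin : |Real.sin (ω * (α + β))| ≤ 1 := Real.abs_sin_le_one _
  rw [abs_mul, abs_mul, abs_of_nonneg (Real.exp_pos _).le]
  calc Real.exp (-(l * α) - c * (α + β + l⁻¹)) * |Real.sin (ω * (α + β))| *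
        |Real.sinh (c / l * Real.exp (-(l * (α + β))))|
      ≤ (Real.exp (-(l * α)) * Real.exp (-c * β) * Real.exp (-(c / l))) * 1 *
        ((1 / 2) * Real.exp (c / l)) := by
        apply mul_le_mul (mul_le_mul hexp hsin (abs_nonneg _) (by positivity)) hsinh
          (abs_nonneg _) (by positivity)
    _ = (1 / 2) * Real.exp (-c * β) * Real.exp (-(l * α)) *
        (Real.exp (-(c / l)) * Real.exp (c / l)) := by ring
    _ = (1 / 2) * Real.exp (-c * β) * Real.exp (-(l * α)) := by
        rw [← Real.exp_add, neg_add_cancel, Real.exp_zero, mul_one]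

lemma stokes_inner_continuous (hl : 0 < l) :
    Continuous (fun p : ℝ × ℝ =>
      Real.exp (-(l * p.2) - k ^ 2 * σ ^ 2 / 2 * (p.2 + p.1 + l⁻¹)) *
        Real.sin (ω * (p.2 + p.1)) *
        Real.sinh (k ^ 2 * σ ^ 2 / (2 * l) * Real.exp (-(l * (p.2 + p.1))))) := by
  fun_prop

lemma stokes_inner_integral_bound (hk : 0 < k) (hσ : 0 < σ) (hl : 0 < l) {β : ℝ} (hβ : 0 ≤ β) :
    |∫ α in Ioi (0:ℝ),
        Real.exp (-(l * α) - k ^ 2 * σ ^ 2 / 2 * (α + β + l⁻¹)) * Real.sin (ω * (α + β)) *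
          Real.sinh (k ^ 2 * σ ^ 2 / (2 * l) * Real.exp (-(l * (α + β))))| ≤
      (1 / 2) * Real.exp (-(k ^ 2 * σ ^ 2 / 2) * β) * l⁻¹ := by
  have hdom : IntegrableOn (fun α =>
      (1 / 2) * Real.exp (-(k ^ 2 * σ ^ 2 / 2) * β) * Real.exp (-(l * α))) (Ioi (0:ℝ)) := by
    have h0 : IntegrableOn (fun x => Real.exp (-(l * x))) (Ioi (0:ℝ)) := by
      simpa [neg_mul] using exp_neg_integrableOn_Ioi 0 hl
    exact h0.const_mul _
  have h1 : ‖∫ α in Ioi (0:ℝ),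
        Real.exp (-(l * α) - k ^ 2 * σ ^ 2 / 2 * (α + β + l⁻¹)) * Real.sin (ω * (α + β)) *
          Real.sinh (k ^ 2 * σ ^ 2 / (2 * l) * Real.exp (-(l * (α + β))))‖ ≤
      ∫ α in Ioi (0:ℝ), (1 / 2) * Real.exp (-(k ^ 2 * σ ^ 2 / 2) * β) * Real.exp (-(l * α)) := by
    refine norm_integral_le_of_norm_le hdom ?_
    filter_upwards [ae_restrict_mem measurableSet_Ioi] with α hα
    rw [Real.norm_eq_abs]
    exact stokes_inner_bound (ω := ω) hk hσ hl hβ (le_of_lt hα)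
  have h2 : (∫ α in Ioi (0:ℝ),
      (1 / 2) * Real.exp (-(k ^ 2 * σ ^ 2 / 2) * β) * Real.exp (-(l * α))) =
      (1 / 2) * Real.exp (-(k ^ 2 * σ ^ 2 / 2) * β) * l⁻¹ := by
    rw [MeasureTheory.integral_const_mul]
    congr 1
    have h3 := integral_comp_mul_left_Ioi (fun x => Real.exp (-x)) 0 hl
    simp only [mul_zero, smul_eq_mul] at h3
    rw [h3, integral_exp_neg_Ioi_zero, mul_one]
  rw [h2] at h1
  rw [Real.norm_eq_abs] at h1
  exact h1

lemma stokes_inner_integrable (hk : 0 < k) (hσ : 0 < σ) (hl : 0 < l) {β : ℝ} (hβ : 0 ≤ β) :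
    IntegrableOn (fun α =>
      Real.exp (-(l * α) - k ^ 2 * σ ^ 2 / 2 * (α + β + l⁻¹)) * Real.sin (ω * (α + β)) *
          Real.sinh (k ^ 2 * σ ^ 2 / (2 * l) * Real.exp (-(l * (α + β))))) (Ioi (0:ℝ)) := by
  have hdom : IntegrableOn (fun α =>
      (1 / 2) * Real.exp (-(k ^ 2 * σ ^ 2 / 2) * β) * Real.exp (-(l * α))) (Ioi (0:ℝ)) := by
    have h0 : IntegrableOn (fun x => Real.exp (-(l * x))) (Ioi (0:ℝ)) := by
      simpa [neg_mul] using exp_neg_integrableOn_Ioi 0 hl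
    exact h0.const_mul _
  refine hdom.mono' ?_ ?_
  · exact ((stokes_inner_continuous (k := k) (ω := ω) (σ := σ) hl).comp
      (continuous_const.prodMk continuous_id)).aestronglyMeasurable
  · filter_upwards [ae_restrict_mem measurableSet_Ioi] with α hα
    rw [Real.norm_eq_abs]
    exact stokes_inner_bound (ω := ω) hk hσ hl hβ (le_of_lt hα)

end aux

/-- The Stokes'-drift kernel satisfies `|M(β)| ≤ u²k e^{−½k²σ²β}` for `β > 0`;
in particular it is Lebesgue integrable on `(0, ∞)`. -/
theorem stokesKernel_bound_and_integrable (u k ω σ l : ℝ)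
    (hu : 0 < u) (hk : 0 < k) (hω : 0 < ω) (hσ : 0 < σ) (hl : 0 < l) :
    (∀ β, 0 < β →
        |stokesKernel u k ω σ l β| ≤ u ^ 2 * k * Real.exp (-(k ^ 2 * σ ^ 2 / 2) * β)) ∧
      IntegrableOn (stokesKernel u k ω σ l) (Ioi 0) := by
  have hbound : ∀ β, 0 ≤ β →
      |stokesKernel u k ω σ l β| ≤ u ^ 2 * k * Real.exp (-(k ^ 2 * σ ^ 2 / 2) * β) := by
    intro β hβ
    have hA : |Real.sin (ω * β) *
        Real.exp (-(k ^ 2 * σ ^ 2 / 2) * (β + l⁻¹ * (1 - Real.exp (-(l * β)))))| ≤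
        Real.exp (-(k ^ 2 * σ ^ 2 / 2) * β) := by
      rw [abs_mul, abs_of_nonneg (Real.exp_pos _).le]
      have hc0 : (0:ℝ) < k ^ 2 * σ ^ 2 / 2 := by positivity
      have h1 : Real.exp (-(k ^ 2 * σ ^ 2 / 2) * (β + l⁻¹ * (1 - Real.exp (-(l * β))))) ≤
          Real.exp (-(k ^ 2 * σ ^ 2 / 2) * β) := by
        apply Real.exp_le_exp.mpr
        have he : Real.exp (-(l * β)) ≤ 1 := by
          rw [Real.exp_le_one_iff]; nlinarith
        have h0 : 0 ≤ l⁻¹ * (1 - Real.exp (-(l * β))) := by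
          apply mul_nonneg (by positivity); linarith
        nlinarith
      calc |Real.sin (ω * β)| *
            Real.exp (-(k ^ 2 * σ ^ 2 / 2) * (β + l⁻¹ * (1 - Real.exp (-(l * β)))))
          ≤ 1 * Real.exp (-(k ^ 2 * σ ^ 2 / 2) * β) :=
            mul_le_mul (Real.abs_sin_le_one _) h1 (Real.exp_pos _).le one_pos.le
        _ = Real.exp (-(k ^ 2 * σ ^ 2 / 2) * β) := one_mul _
    have hI := stokes_inner_integral_bound (ω := ω) hk hσ hl hβ
    rw [stokesKernel, abs_mul]
    have habs : |(1:ℝ) / 2 * u ^ 2 * k| = 1 / 2 * u ^ 2 * k := by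
      rw [abs_of_nonneg]; positivity
    rw [habs]
    have hdiff : |Real.sin (ω * β) *
        Real.exp (-(k ^ 2 * σ ^ 2 / 2) * (β + l⁻¹ * (1 - Real.exp (-(l * β))))) -
        l * ∫ α in Ioi (0 : ℝ),
        Real.exp (-(l * α) - k ^ 2 * σ ^ 2 / 2 * (α + β + l⁻¹)) * Real.sin (ω * (α + β)) *
          Real.sinh (k ^ 2 * σ ^ 2 / (2 * l) * Real.exp (-(l * (α + β))))| ≤
        Real.exp (-(k ^ 2 * σ ^ 2 / 2) * β) +
          (1 / 2) * Real.exp (-(k ^ 2 * σ ^ 2 / 2) * β) := by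
      refine (abs_sub _ _).trans ?_
      have hIl : |l * ∫ α in Ioi (0 : ℝ),
          Real.exp (-(l * α) - k ^ 2 * σ ^ 2 / 2 * (α + β + l⁻¹)) * Real.sin (ω * (α + β)) *
            Real.sinh (k ^ 2 * σ ^ 2 / (2 * l) * Real.exp (-(l * (α + β))))| ≤
          (1 / 2) * Real.exp (-(k ^ 2 * σ ^ 2 / 2) * β) := by
        rw [abs_mul, abs_of_nonneg hl.le]
        calc l * |∫ α in Ioi (0 : ℝ),
            Real.exp (-(l * α) - k ^ 2 * σ ^ 2 / 2 * (α + β + l⁻¹)) * Real.sin (ω * (α + β)) *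
              Real.sinh (k ^ 2 * σ ^ 2 / (2 * l) * Real.exp (-(l * (α + β))))|
            ≤ l * ((1 / 2) * Real.exp (-(k ^ 2 * σ ^ 2 / 2) * β) * l⁻¹) :=
              mul_le_mul_of_nonneg_left hI hl.le
          _ = (1 / 2) * Real.exp (-(k ^ 2 * σ ^ 2 / 2) * β) := by
              field_simp
      exact add_le_add hA hIl
    calc 1 / 2 * u ^ 2 * k * |Real.sin (ω * β) *
        Real.exp (-(k ^ 2 * σ ^ 2 / 2) * (β + l⁻¹ * (1 - Real.exp (-(l * β))))) -
        l * ∫ α in Ioi (0 : ℝ),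
        Real.exp (-(l * α) - k ^ 2 * σ ^ 2 / 2 * (α + β + l⁻¹)) * Real.sin (ω * (α + β)) *
          Real.sinh (k ^ 2 * σ ^ 2 / (2 * l) * Real.exp (-(l * (α + β))))|
        ≤ 1 / 2 * u ^ 2 * k * (Real.exp (-(k ^ 2 * σ ^ 2 / 2) * β) +
            (1 / 2) * Real.exp (-(k ^ 2 * σ ^ 2 / 2) * β)) :=
          mul_le_mul_of_nonneg_left hdiff (by positivity)
      _ ≤ u ^ 2 * k * Real.exp (-(k ^ 2 * σ ^ 2 / 2) * β) := by
          nlinarith [mul_pos (mul_pos (pow_pos hu 2) hk)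
            (Real.exp_pos (-(k ^ 2 * σ ^ 2 / 2) * β))]
  refine ⟨fun β hβ => hbound β hβ.le, ?_⟩
  have hmeas : AEStronglyMeasurable (stokesKernel u k ω σ l)
      (volume.restrict (Ioi (0:ℝ))) := by
    have hF : StronglyMeasurable (fun β => ∫ α in Ioi (0:ℝ),
        Real.exp (-(l * α) - k ^ 2 * σ ^ 2 / 2 * (α + β + l⁻¹)) * Real.sin (ω * (α + β)) *
          Real.sinh (k ^ 2 * σ ^ 2 / (2 * l) * Real.exp (-(l * (α + β))))) :=
      ((stokes_inner_continuous (k := k) (ω := ω) (σ := σ)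
        hl).stronglyMeasurable).integral_prod_right'
    have hcont1 : Continuous (fun β : ℝ => Real.sin (ω * β) *
        Real.exp (-(k ^ 2 * σ ^ 2 / 2) * (β + l⁻¹ * (1 - Real.exp (-(l * β)))))) := by
      fun_prop
    unfold stokesKernel
    exact aestronglyMeasurable_const.mul
      (hcont1.aestronglyMeasurable.sub (hF.const_mul l).aestronglyMeasurable)
  have hdom : IntegrableOn (fun β => u ^ 2 * k * Real.exp (-(k ^ 2 * σ ^ 2 / 2) * β))
      (Ioi (0:ℝ)) := by
    have h0 : IntegrableOn (fun x => Real.exp (-(k ^ 2 * σ ^ 2 / 2 * x))) (Ioi (0:ℝ)) := by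
      simpa [neg_mul] using
        exp_neg_integrableOn_Ioi 0 (show 0 < k ^ 2 * σ ^ 2 / 2 by positivity)
    have := h0.const_mul (u ^ 2 * k)
    simp [neg_mul, mul_comm] at this ⊢
    exact this
  refine hdom.mono' hmeas ?_
  filter_upwards [ae_restrict_mem measurableSet_Ioi] with β hβ
  simpa [Real.norm_eq_abs] using hbound β (le_of_lt hβ)
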